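/- For every β ∈ k with β ≠ 0 and every α ∈ k, the set of monomials { uⁱ(du)ʲdˡ : i, j, l ∈ ℕ } is a k-linear basis of the down-up algebra D(α,β). -/

import Mathlib

open FreeAlgebra

noncomputable section

/-- The defining relations of the down-up algebra `D(a,b)` (with `u = ι k 0`, `d = ι k 1`). -/
inductive DownUpRel (k : Type*) [CommRing k] (a b : k) :
    FreeAlgebra k (Fin 2) → FreeAlgebra k (Fin 2) → Prop
  | rel1 : DownUpRel k a b (ι k 0 * ι k 0 * ι k 1)
      (a • (ι k 0 * ι k 1 * ι k 0) + b • (ι k 1 * ι k 0 * ι k 0))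
  | rel2 : DownUpRel k a b (ι k 0 * ι k 1 * ι k 1)
      (a • (ι k 1 * ι k 0 * ι k 1) + b • (ι k 1 * ι k 1 * ι k 0))

/-- The down-up algebra `D(a,b)`. -/
abbrev DownUp (k : Type*) [CommRing k] (a b : k) : Type _ :=
  RingQuot (DownUpRel k a b)

/-- The generator `u` of the down-up algebra. -/
def DownUp.u (k : Type*) [CommRing k] (a b : k) : DownUp k a b :=
  RingQuot.mkAlgHom k (DownUpRel k a b) (ι k 0)

/-- The generator `d` of the down-up algebra. -/
def DownUp.d (k : Type*) [CommRing k] (a b : k) : DownUp k a b :=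
  RingQuot.mkAlgHom k (DownUpRel k a b) (ι k 1)

namespace DUAux

variable {k : Type*} [Field k] (α β : k)

/-- monomial u^i (du)^j d^l -/
def mon (t : ℕ × ℕ × ℕ) : DownUp k α β :=
  DownUp.u k α β ^ t.1 * (DownUp.d k α β * DownUp.u k α β) ^ t.2.1 * DownUp.d k α β ^ t.2.2

/-- span of monomials -/
def S : Submodule k (DownUp k α β) := Submodule.span k (Set.range (mon α β))

lemma rel1' : DownUp.u k α β * DownUp.u k α β * DownUp.d k α β
    = α • (DownUp.u k α β * DownUp.d k α β * DownUp.u k α β)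
      + β • (DownUp.d k α β * DownUp.u k α β * DownUp.u k α β) := by
  have h := RingQuot.mkAlgHom_rel k (DownUpRel.rel1 (k := k) (a := α) (b := β))
  simpa [DownUp.u, DownUp.d, map_mul, map_add] using h

lemma rel2' : DownUp.u k α β * DownUp.d k α β * DownUp.d k α β
    = α • (DownUp.d k α β * DownUp.u k α β * DownUp.d k α β)
      + β • (DownUp.d k α β * DownUp.d k α β * DownUp.u k α β) := by
  have h := RingQuot.mkAlgHom_rel k (DownUpRel.rel2 (k := k) (a := α) (b := β))
  simpa [DownUp.u, DownUp.d, map_mul, map_add] using h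

variable {α β}

lemma du2 (hβ : β ≠ 0) : DownUp.d k α β * DownUp.u k α β * DownUp.u k α β
    = β⁻¹ • (DownUp.u k α β * DownUp.u k α β * DownUp.d k α β)
      - (α * β⁻¹) • (DownUp.u k α β * DownUp.d k α β * DownUp.u k α β) := by
  have h := rel1' (k := k) α β
  have : β • (DownUp.d k α β * DownUp.u k α β * DownUp.u k α β)
      = DownUp.u k α β * DownUp.u k α β * DownUp.d k α β
        - α • (DownUp.u k α β * DownUp.d k α β * DownUp.u k α β) := by
    rw [h]; abel
  calc DownUp.d k α β * DownUp.u k α β * DownUp.u k α β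
      = β⁻¹ • (β • (DownUp.d k α β * DownUp.u k α β * DownUp.u k α β)) := by
        rw [smul_smul, inv_mul_cancel₀ hβ, one_smul]
    _ = _ := by rw [this, smul_sub, smul_smul, mul_comm β⁻¹ α]

lemma d2u (hβ : β ≠ 0) : DownUp.d k α β * DownUp.d k α β * DownUp.u k α β
    = β⁻¹ • (DownUp.u k α β * DownUp.d k α β * DownUp.d k α β)
      - (α * β⁻¹) • (DownUp.d k α β * DownUp.u k α β * DownUp.d k α β) := by
  have h := rel2' (k := k) α β
  have : β • (DownUp.d k α β * DownUp.d k α β * DownUp.u k α β)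
      = DownUp.u k α β * DownUp.d k α β * DownUp.d k α β
        - α • (DownUp.d k α β * DownUp.u k α β * DownUp.d k α β) := by
    rw [h]; abel
  calc DownUp.d k α β * DownUp.d k α β * DownUp.u k α β
      = β⁻¹ • (β • (DownUp.d k α β * DownUp.d k α β * DownUp.u k α β)) := by
        rw [smul_smul, inv_mul_cancel₀ hβ, one_smul]
    _ = _ := by rw [this, smul_sub, smul_smul, mul_comm β⁻¹ α]


/-- value of a word in binary, d=1 most significant first -/
def phi : List (Fin 2) → ℕ
  | [] => 0
  | c :: t => c.val * 2 ^ t.length + phi t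

lemma phi_append (a b : List (Fin 2)) :
    phi (a ++ b) = phi a * 2 ^ b.length + phi b := by
  induction a with
  | nil => simp [phi]
  | cons c t ih =>
      have hl : (t ++ b).length = t.length + b.length := List.length_append
      simp only [List.cons_append, phi, List.append_eq, ih, hl, pow_add]
      ring

lemma phi_middle_lt {x y : List (Fin 2)} (A B : List (Fin 2))
    (hlen : x.length = y.length) (hxy : phi x < phi y) :
    phi (A ++ x ++ B) < phi (A ++ y ++ B) := by
  rw [List.append_assoc, List.append_assoc, phi_append, phi_append, phi_append, phi_append]
  simp only [List.length_append, hlen]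
  have : phi x * 2 ^ B.length < phi y * 2 ^ B.length := by
    have h2 : 0 < 2 ^ B.length := Nat.pow_pos (by norm_num)
    exact Nat.mul_lt_mul_of_lt_of_le hxy le_rfl h2
  omega

/-- (du)^j as a word -/
def dus : ℕ → List (Fin 2)
  | 0 => []
  | n + 1 => 1 :: 0 :: dus n

/-- normal word u^i (du)^j d^l -/
def nf (i j l : ℕ) : List (Fin 2) :=
  List.replicate i 0 ++ dus j ++ List.replicate l 1

lemma decomp (w : List (Fin 2)) :
    (∃ i j l, w = nf i j l) ∨
      ∃ A B : List (Fin 2), w = A ++ [1, 0, 0] ++ B ∨ w = A ++ [1, 1, 0] ++ B := by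
  induction w with
  | nil => exact Or.inl ⟨0, 0, 0, rfl⟩
  | cons c t ih =>
      rcases ih with ⟨i, j, l, rfl⟩ | ⟨A, B, h | h⟩
      · fin_cases c
        · exact Or.inl ⟨i + 1, j, l, rfl⟩
        · -- c = 1 (d)
          match i, j with
          | i + 2, j =>
            refine Or.inr ⟨[], nf i j l, Or.inl ?_⟩
            simp [nf, List.replicate_succ]
          | 1, j =>
            refine Or.inl ⟨0, j + 1, l, ?_⟩
            simp [nf, List.replicate_succ, dus]
          | 0, j + 1 =>
            refine Or.inr ⟨[], dus j ++ List.replicate l 1, Or.inr ?_⟩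
            simp [nf, dus]
          | 0, 0 =>
            refine Or.inl ⟨0, 0, l + 1, ?_⟩
            simp [nf, dus, List.replicate_succ]
      · exact Or.inr ⟨c :: A, B, Or.inl (by simp [h])⟩
      · exact Or.inr ⟨c :: A, B, Or.inr (by simp [h])⟩



section Words

variable (α β)

/-- generators as a function -/
def gen : Fin 2 → DownUp k α β := ![DownUp.u k α β, DownUp.d k α β]

/-- word to algebra element -/
def mkw (w : List (Fin 2)) : DownUp k α β := (w.map (gen α β)).prod

@[simp] lemma mkw_nil : mkw α β ([] : List (Fin 2)) = 1 := rfl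

lemma mkw_cons (c : Fin 2) (t : List (Fin 2)) :
    mkw α β (c :: t) = gen α β c * mkw α β t := by
  simp [mkw]

lemma mkw_append (a b : List (Fin 2)) :
    mkw α β (a ++ b) = mkw α β a * mkw α β b := by
  simp [mkw]

lemma mkw_replicate_u (i : ℕ) :
    mkw α β (List.replicate i 0) = DownUp.u k α β ^ i := by
  induction i with
  | zero => simp
  | succ n ih => rw [List.replicate_succ, mkw_cons, ih, pow_succ']; rfl

lemma mkw_replicate_d (l : ℕ) :
    mkw α β (List.replicate l 1) = DownUp.d k α β ^ l := by
  induction l with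
  | zero => simp
  | succ n ih => rw [List.replicate_succ, mkw_cons, ih, pow_succ']; rfl

lemma mkw_dus (j : ℕ) :
    mkw α β (dus j) = (DownUp.d k α β * DownUp.u k α β) ^ j := by
  induction j with
  | zero => simp [dus]
  | succ n ih =>
      rw [dus, mkw_cons, mkw_cons, ih, pow_succ']
      show DownUp.d k α β * (DownUp.u k α β * _) = _
      rw [mul_assoc]

lemma mkw_nf (i j l : ℕ) : mkw α β (nf i j l) = mon α β (i, j, l) := by
  rw [nf, mkw_append, mkw_append, mkw_replicate_u, mkw_dus, mkw_replicate_d, mon]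

variable {α β}

lemma mkw_mem_aux (hβ : β ≠ 0) : ∀ n, ∀ w : List (Fin 2), phi w < n → mkw α β w ∈ S α β := by
  intro n
  induction n with
  | zero => intro w h; omega
  | succ n ih =>
      intro w hw
      rcases decomp w with ⟨i, j, l, rfl⟩ | ⟨A, B, h | h⟩
      · rw [mkw_nf]; exact Submodule.subset_span ⟨(i, j, l), rfl⟩
      · subst h
        have e : mkw α β (A ++ [1, 0, 0] ++ B)
            = β⁻¹ • mkw α β (A ++ [0, 0, 1] ++ B)
              - (α * β⁻¹) • mkw α β (A ++ [0, 1, 0] ++ B) := by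
          rw [mkw_append, mkw_append, mkw_append, mkw_append, mkw_append, mkw_append]
          have h100 : mkw α β [1, 0, 0] = DownUp.d k α β * DownUp.u k α β * DownUp.u k α β := by
            simp [mkw_cons, gen, mul_assoc]
          have h001 : mkw α β [0, 0, 1] = DownUp.u k α β * DownUp.u k α β * DownUp.d k α β := by
            simp [mkw_cons, gen, mul_assoc]
          have h010 : mkw α β [0, 1, 0] = DownUp.u k α β * DownUp.d k α β * DownUp.u k α β := by
            simp [mkw_cons, gen, mul_assoc]
          rw [h100, h001, h010, du2 hβ]
          simp only [mul_sub, sub_mul, mul_smul_comm, smul_mul_assoc]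
        rw [e]
        have l1 : phi (A ++ [0, 0, 1] ++ B) < n := by
          have := phi_middle_lt (x := [0,0,1]) (y := [1,0,0]) A B rfl (by norm_num [phi])
          omega
        have l2 : phi (A ++ [0, 1, 0] ++ B) < n := by
          have := phi_middle_lt (x := [0,1,0]) (y := [1,0,0]) A B rfl (by norm_num [phi])
          omega
        exact sub_mem (Submodule.smul_mem _ _ (ih _ l1)) (Submodule.smul_mem _ _ (ih _ l2))
      · subst h
        have e : mkw α β (A ++ [1, 1, 0] ++ B)
            = β⁻¹ • mkw α β (A ++ [0, 1, 1] ++ B)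
              - (α * β⁻¹) • mkw α β (A ++ [1, 0, 1] ++ B) := by
          rw [mkw_append, mkw_append, mkw_append, mkw_append, mkw_append, mkw_append]
          have h110 : mkw α β [1, 1, 0] = DownUp.d k α β * DownUp.d k α β * DownUp.u k α β := by
            simp [mkw_cons, gen, mul_assoc]
          have h011 : mkw α β [0, 1, 1] = DownUp.u k α β * DownUp.d k α β * DownUp.d k α β := by
            simp [mkw_cons, gen, mul_assoc]
          have h101 : mkw α β [1, 0, 1] = DownUp.d k α β * DownUp.u k α β * DownUp.d k α β := by
            simp [mkw_cons, gen, mul_assoc]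
          rw [h110, h011, h101, d2u hβ]
          simp only [mul_sub, sub_mul, mul_smul_comm, smul_mul_assoc]
        rw [e]
        have l1 : phi (A ++ [0, 1, 1] ++ B) < n := by
          have := phi_middle_lt (x := [0,1,1]) (y := [1,1,0]) A B rfl (by norm_num [phi])
          omega
        have l2 : phi (A ++ [1, 0, 1] ++ B) < n := by
          have := phi_middle_lt (x := [1,0,1]) (y := [1,1,0]) A B rfl (by norm_num [phi])
          omega
        exact sub_mem (Submodule.smul_mem _ _ (ih _ l1)) (Submodule.smul_mem _ _ (ih _ l2))

lemma mkw_mem (hβ : β ≠ 0) (w : List (Fin 2)) : mkw α β w ∈ S α β :=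
  mkw_mem_aux hβ (phi w + 1) w (Nat.lt_succ_self _)

lemma mul_mem_S (hβ : β ≠ 0) {x y : DownUp k α β} (hx : x ∈ S α β) (hy : y ∈ S α β) :
    x * y ∈ S α β := by
  induction hx using Submodule.span_induction generalizing y with
  | mem x hx =>
      obtain ⟨t, rfl⟩ := hx
      induction hy using Submodule.span_induction with
      | mem y hy =>
          obtain ⟨t', rfl⟩ := hy
          rw [← mkw_nf α β t.1 t.2.1 t.2.2, ← mkw_nf α β t'.1 t'.2.1 t'.2.2, ← mkw_append]
          exact mkw_mem hβ _
      | zero => rw [mul_zero]; exact zero_mem _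
      | add a b _ _ ha hb => rw [mul_add]; exact add_mem ha hb
      | smul c a _ ha => rw [mul_smul_comm]; exact Submodule.smul_mem _ _ ha
  | zero => rw [zero_mul]; exact zero_mem _
  | add a b _ _ ha hb => rw [add_mul]; exact add_mem (ha hy) (hb hy)
  | smul c a _ ha => rw [smul_mul_assoc]; exact Submodule.smul_mem _ _ (ha hy)

lemma span_top (hβ : β ≠ 0) : S (k := k) α β = ⊤ := by
  rw [eq_top_iff]
  rintro x -
  obtain ⟨y, rfl⟩ := RingQuot.mkAlgHom_surjective k (DownUpRel k α β) x
  induction y using FreeAlgebra.induction with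
  | grade0 r =>
      rw [AlgHom.commutes]
      have h1 : (1 : DownUp k α β) ∈ S α β := by
        have : mon α β (0, 0, 0) = 1 := by simp [mon]
        exact this ▸ Submodule.subset_span ⟨(0, 0, 0), rfl⟩
      rw [Algebra.algebraMap_eq_smul_one]
      exact Submodule.smul_mem _ _ h1
  | grade1 i =>
      have h2 : i = 0 ∨ i = 1 := by fin_cases i; exacts [Or.inl rfl, Or.inr rfl]
      rcases h2 with rfl | rfl
      · show DownUp.u k α β ∈ S α β
        have : mon α β (1, 0, 0) = DownUp.u k α β := by simp [mon]
        exact this ▸ Submodule.subset_span ⟨(1, 0, 0), rfl⟩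
      · show DownUp.d k α β ∈ S α β
        have : mon α β (0, 0, 1) = DownUp.d k α β := by simp [mon]
        exact this ▸ Submodule.subset_span ⟨(0, 0, 1), rfl⟩
  | mul a b ha hb => rw [map_mul]; exact mul_mem_S hβ ha hb
  | add a b ha hb => rw [map_add]; exact add_mem ha hb

end Words


variable {k : Type*} [Field k] (α β : k)

def fwd (v : k × k) : ℕ → k × k
  | 0 => v
  | n + 1 => ((fwd v n).2, β⁻¹ * (fwd v n).1 - α * β⁻¹ * (fwd v n).2)

def bwd (v : k × k) : ℕ → k × k
  | 0 => v
  | n + 1 => (α * (bwd v n).1 + β * (bwd v n).2, (bwd v n).1)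

def seq (v : k × k) (n : ℤ) : k :=
  if 0 ≤ n then (fwd α β v n.toNat).1 else (bwd α β v (-n).toNat).1

variable {α β}
variable {v : k × k}

lemma seq_nonneg (n : ℕ) : seq α β v (n : ℤ) = (fwd α β v n).1 := by
  simp [seq, Int.toNat_natCast]

lemma seq_neg (n : ℕ) : seq α β v (-(n : ℤ)) = (bwd α β v n).1 := by
  rcases Nat.eq_zero_or_pos n with rfl | hn
  · simp [seq, fwd, bwd]
  · have h : ¬ (0 ≤ -(n : ℤ)) := by omega
    simp [seq, h, hn.ne']

lemma fwd_rec (hβ : β ≠ 0) (n : ℕ) :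
    (fwd α β v n).1 = α * (fwd α β v (n + 1)).1 + β * (fwd α β v (n + 2)).1 := by
  have h1 : (fwd α β v (n+1)).1 = (fwd α β v n).2 := rfl
  have h2 : (fwd α β v (n+2)).1 = (fwd α β v (n+1)).2 := rfl
  have h3 : (fwd α β v (n+1)).2 = β⁻¹ * (fwd α β v n).1 - α * β⁻¹ * (fwd α β v n).2 := rfl
  rw [h1, h2, h3]
  field_simp
  ring

lemma seq_rec (hβ : β ≠ 0) (n : ℤ) :
    seq α β v (n - 1) = α * seq α β v n + β * seq α β v (n + 1) := by
  rcases le_or_gt 1 n with h | h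
  · obtain ⟨m, rfl⟩ : ∃ m : ℕ, n = (m : ℤ) + 1 := ⟨(n - 1).toNat, by omega⟩
    have e1 : (m : ℤ) + 1 - 1 = (m : ℤ) := by ring
    have e2 : (m : ℤ) + 1 = ((m + 1 : ℕ) : ℤ) := by push_cast; ring
    have e3 : (m : ℤ) + 1 + 1 = ((m + 2 : ℕ) : ℤ) := by push_cast; ring
    rw [e1, e3, e2, seq_nonneg, seq_nonneg, seq_nonneg]
    exact fwd_rec hβ m
  · obtain ⟨m, rfl⟩ : ∃ m : ℕ, n = -(m : ℤ) := ⟨(-n).toNat, by omega⟩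
    have e1 : -(m : ℤ) - 1 = -((m + 1 : ℕ) : ℤ) := by push_cast; ring
    rw [e1, seq_neg, seq_neg]
    have hb1 : (bwd α β v (m + 1)).1 = α * (bwd α β v m).1 + β * (bwd α β v m).2 := rfl
    rw [hb1]
    congr 1
    congr 1
    -- ⊢ (bwd α β v m).2 = seq α β v (-(m:ℤ) + 1)
    cases m with
    | zero => simp [bwd, seq, fwd]
    | succ m' =>
        have e2 : -((m' + 1 : ℕ) : ℤ) + 1 = -(m' : ℤ) := by push_cast; ring
        rw [e2, seq_neg]
        rfl

variable (α β)

def aseq : ℤ → k := seq α β (1, 0)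
def bseq : ℤ → k := seq α β (0, 1)

/-- Wronskian -/
def wr (m : ℤ) : k := aseq α β m * bseq α β (m + 1) - aseq α β (m + 1) * bseq α β m

variable {α β}

lemma aseq_rec (hβ : β ≠ 0) (n : ℤ) :
    aseq α β (n - 1) = α * aseq α β n + β * aseq α β (n + 1) := seq_rec hβ n

lemma bseq_rec (hβ : β ≠ 0) (n : ℤ) :
    bseq α β (n - 1) = α * bseq α β n + β * bseq α β (n + 1) := seq_rec hβ n

lemma aseq_zero : aseq α β 0 = 1 := by simp [aseq, seq, fwd]
lemma bseq_zero : bseq α β 0 = 0 := by simp [bseq, seq, fwd]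
lemma aseq_one : aseq α β 1 = 0 := by
  have : aseq α β ((1 : ℕ) : ℤ) = (fwd α β (1, 0) 1).1 := seq_nonneg 1
  simpa [fwd] using this
lemma bseq_one : bseq α β 1 = 1 := by
  have : bseq α β ((1 : ℕ) : ℤ) = (fwd α β (0, 1) 1).1 := seq_nonneg 1
  simpa [fwd] using this

lemma wr_succ (hβ : β ≠ 0) (m : ℤ) : β * wr α β (m + 1) = - wr α β m := by
  have ha : aseq α β (m + 1 - 1) = α * aseq α β (m + 1) + β * aseq α β (m + 1 + 1) :=
    aseq_rec (α := α) hβ (m + 1)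
  have hb : bseq α β (m + 1 - 1) = α * bseq α β (m + 1) + β * bseq α β (m + 1 + 1) :=
    bseq_rec (α := α) hβ (m + 1)
  have e : m + 1 - 1 = m := by ring
  rw [e] at ha hb
  have e2 : m + 1 + 1 = m + 2 := by ring
  rw [e2] at ha hb
  unfold wr
  have e3 : m + 1 + 1 = m + 2 := by ring
  rw [e3]
  linear_combination bseq α β (m+1) * ha - aseq α β (m+1) * hb

lemma wr_pred (hβ : β ≠ 0) (m : ℤ) : wr α β (m - 1) = - β * wr α β m := by
  have ha := aseq_rec (α := α) hβ m
  have hb := bseq_rec (α := α) hβ m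
  unfold wr
  have e : m - 1 + 1 = m := by ring
  rw [e]
  linear_combination bseq α β m * ha - aseq α β m * hb

lemma wr_ne (hβ : β ≠ 0) (m : ℤ) : wr α β m ≠ 0 := by
  induction m using Int.induction_on with
  | zero => simp [wr, aseq_zero, bseq_zero, aseq_one, bseq_one]
  | succ i ih =>
      intro h0
      have h := wr_succ (α := α) hβ (i : ℤ)
      rw [h0, mul_zero] at h
      exact ih (neg_eq_zero.mp h.symm)
  | pred i ih =>
      intro h0
      have h := wr_pred (α := α) hβ (-(i : ℤ))
      rw [h0] at h
      have h2 : wr α β (-(i : ℤ)) = 0 := by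
        rcases mul_eq_zero.mp h.symm with h3 | h3
        · exact absurd h3 (neg_ne_zero.mpr hβ)
        · exact h3
      exact ih h2

open MvPolynomial

variable (α β)

noncomputable def mu (n : ℤ) : MvPolynomial (Fin 2) k :=
  C (aseq α β n) * X 0 + C (bseq α β n) * X 1

variable {α β}

lemma mu_rec (hβ : β ≠ 0) (n : ℤ) :
    mu α β (n - 1) = C α * mu α β n + C β * mu α β (n + 1) := by
  have ha := aseq_rec (α := α) hβ n
  have hb := bseq_rec (α := α) hβ n
  unfold mu
  rw [ha, hb]
  push_cast [C_add, C_mul]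
  ring

lemma mu_rec2 (hβ : β ≠ 0) (n : ℤ) :
    mu α β n = C α * mu α β (n + 1) + C β * mu α β (n + 2) := by
  have := mu_rec (α := α) hβ (n + 1)
  have e : n + 1 - 1 = n := by ring
  have e2 : n + 1 + 1 = n + 2 := by ring
  rwa [e, e2] at this

lemma mu_hom (n : ℤ) : (mu α β n).IsHomogeneous 1 := by
  unfold mu
  apply MvPolynomial.IsHomogeneous.add
  · simpa using (isHomogeneous_C (Fin 2) (aseq α β n)).mul (isHomogeneous_X _ 0)
  · simpa using (isHomogeneous_C (Fin 2) (bseq α β n)).mul (isHomogeneous_X _ 1)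

lemma eval_mu (x0 y0 : k) (n : ℤ) :
    eval (fun i : Fin 2 => if i = 0 then x0 else y0) (mu α β n)
      = aseq α β n * x0 + bseq α β n * y0 := by
  simp [mu]

lemma mu_ne_zero (hβ : β ≠ 0) (n : ℤ) : mu α β n ≠ 0 := by
  intro h
  have ha : aseq α β n = 0 := by
    have := congrArg (eval (fun i : Fin 2 => if i = 0 then (1 : k) else 0)) h
    rw [eval_mu] at this
    simpa using this
  have hb : bseq α β n = 0 := by
    have := congrArg (eval (fun i : Fin 2 => if i = 0 then (0 : k) else 1)) h
    rw [eval_mu] at this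
    simpa using this
  have := wr_ne (α := α) hβ (n - 1)
  apply this
  unfold wr
  have e : n - 1 + 1 = n := by ring
  rw [e, ha, hb]
  ring

/-! ### the representation space -/

abbrev R2 (k : Type*) [Field k] := MvPolynomial (Fin 2) k

abbrev VV (k : Type*) [Field k] := ℤ →₀ R2 k

variable (α β)

noncomputable def Uop : VV k →ₗ[R2 k] VV k := Finsupp.lmapDomain (R2 k) (R2 k) (fun n => n + 1)

noncomputable def Dop : VV k →ₗ[R2 k] VV k :=
  Finsupp.lsum (R2 k) (fun n => mu α β n • Finsupp.lsingle (n - 1))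

noncomputable def Uk : VV k →ₗ[k] VV k := (Uop (k := k)).restrictScalars k
noncomputable def Dk : VV k →ₗ[k] VV k := (Dop α β).restrictScalars k

variable {α β}

lemma Uk_single (n : ℤ) (r : R2 k) :
    Uk (k := k) (Finsupp.single n r) = Finsupp.single (n + 1) r := by
  rw [Uk, LinearMap.restrictScalars_apply, Uop, Finsupp.lmapDomain_apply, Finsupp.mapDomain_single]

lemma Dk_single (n : ℤ) (r : R2 k) :
    Dk α β (Finsupp.single n r) = Finsupp.single (n - 1) (mu α β n * r) := by
  rw [Dk, LinearMap.restrictScalars_apply, Dop, Finsupp.lsum_single, LinearMap.smul_apply,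
    Finsupp.lsingle_apply, Finsupp.smul_single, smul_eq_mul]

lemma endo_rel1 (hβ : β ≠ 0) :
    Uk (k := k) * Uk (k := k) * Dk α β
      = α • (Uk (k := k) * Dk α β * Uk (k := k)) + β • (Dk α β * Uk (k := k) * Uk (k := k)) := by
  apply Finsupp.lhom_ext
  intro n r
  simp only [Module.End.mul_apply, LinearMap.add_apply, LinearMap.smul_apply,
    Uk_single, Dk_single]
  rw [Finsupp.smul_single, Finsupp.smul_single]
  have e1 : n - 1 + 1 + 1 = n + 1 := by ring
  have e2 : n + 1 - 1 + 1 = n + 1 := by ring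
  have e3 : n + 1 + 1 - 1 = n + 1 := by ring
  rw [e1, e2, e3, ← Finsupp.single_add]
  congr 1
  rw [MvPolynomial.smul_eq_C_mul, MvPolynomial.smul_eq_C_mul]
  rw [mu_rec2 (α := α) hβ n]
  ring

lemma endo_rel2 (hβ : β ≠ 0) :
    Uk (k := k) * Dk α β * Dk α β
      = α • (Dk α β * Uk (k := k) * Dk α β) + β • (Dk α β * Dk α β * Uk (k := k)) := by
  apply Finsupp.lhom_ext
  intro n r
  simp only [Module.End.mul_apply, LinearMap.add_apply, LinearMap.smul_apply,
    Uk_single, Dk_single]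
  rw [Finsupp.smul_single, Finsupp.smul_single]
  have e1 : n - 1 - 1 + 1 = n - 1 := by ring
  have e2 : n - 1 + 1 = n := by ring
  have e3 : n + 1 - 1 = n := by ring
  rw [e1, e2, e3, ← Finsupp.single_add]
  congr 1
  rw [MvPolynomial.smul_eq_C_mul, MvPolynomial.smul_eq_C_mul]
  have h := mu_rec (α := α) hβ n
  rw [h]
  ring


section Rep

open MvPolynomial

variable (α β)

/-- the representation of the free algebra -/
noncomputable def rho : FreeAlgebra k (Fin 2) →ₐ[k] Module.End k (VV k) :=
  FreeAlgebra.lift k (fun i : Fin 2 => if i = 0 then Uk (k := k) else Dk α β)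

lemma rho_u : rho α β (FreeAlgebra.ι k 0) = Uk (k := k) := by
  simp [rho]

lemma rho_d : rho α β (FreeAlgebra.ι k 1) = Dk α β := by
  simp [rho]

variable {α β}

lemma rho_compat (hβ : β ≠ 0) :
    ∀ ⦃x y : FreeAlgebra k (Fin 2)⦄, DownUpRel k α β x y → rho α β x = rho α β y := by
  intro x y h
  rcases h with _ | _
  · rw [map_add, map_smul, map_smul, map_mul, map_mul, map_mul, map_mul, map_mul, map_mul,
      rho_u, rho_d]
    exact endo_rel1 hβ
  · rw [map_add, map_smul, map_smul, map_mul, map_mul, map_mul, map_mul, map_mul, map_mul,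
      rho_u, rho_d]
    exact endo_rel2 hβ

variable (α β)

/-- the representation of the down-up algebra -/
noncomputable def rhobar (hβ : β ≠ 0) : DownUp k α β →ₐ[k] Module.End k (VV k) :=
  RingQuot.liftAlgHom k ⟨rho α β, rho_compat hβ⟩

variable {α β}

lemma rhobar_u (hβ : β ≠ 0) : rhobar α β hβ (DownUp.u k α β) = Uk (k := k) := by
  rw [rhobar, DownUp.u, RingQuot.liftAlgHom_mkAlgHom_apply, rho_u]

lemma rhobar_d (hβ : β ≠ 0) : rhobar α β hβ (DownUp.d k α β) = Dk α β := by
  rw [rhobar, DownUp.d, RingQuot.liftAlgHom_mkAlgHom_apply, rho_d]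

lemma Uk_pow_single (i : ℕ) (n : ℤ) (r : R2 k) :
    (Uk (k := k) ^ i) (Finsupp.single n r) = Finsupp.single (n + i) r := by
  induction i with
  | zero => simp
  | succ m ih =>
      rw [pow_succ', Module.End.mul_apply, ih, Uk_single]
      congr 1
      push_cast
      ring

lemma Dk_pow_single (l : ℕ) (n : ℤ) (r : R2 k) :
    (Dk α β ^ l) (Finsupp.single n r)
      = Finsupp.single (n - l) ((∏ t ∈ Finset.range l, mu α β (n - t)) * r) := by
  induction l with
  | zero => simp
  | succ m ih =>
      rw [pow_succ', Module.End.mul_apply, ih, Dk_single, Finset.prod_range_succ]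
      have e : n - (m : ℕ) - 1 = n - ((m + 1 : ℕ) : ℤ) := by push_cast; ring
      rw [e]
      congr 1
      ring

lemma DU_pow_single (j : ℕ) (n : ℤ) (r : R2 k) :
    ((Dk α β * Uk (k := k)) ^ j) (Finsupp.single n r)
      = Finsupp.single n (mu α β (n + 1) ^ j * r) := by
  induction j with
  | zero => simp
  | succ m ih =>
      rw [pow_succ', Module.End.mul_apply, ih, Module.End.mul_apply, Uk_single, Dk_single]
      have e : n + 1 - 1 = n := by ring
      rw [e]
      congr 1
      ring

/-- action of a monomial on a basis vector -/
lemma rhobar_mon (hβ : β ≠ 0) (t : ℕ × ℕ × ℕ) (m : ℤ) :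
    rhobar α β hβ (mon α β t) (Finsupp.single m 1)
      = Finsupp.single (m - t.2.2 + t.1)
          (mu α β (m - t.2.2 + 1) ^ t.2.1 * ∏ s ∈ Finset.range t.2.2, mu α β (m - s)) := by
  obtain ⟨i, j, l⟩ := t
  rw [mon, map_mul, map_mul, map_pow, map_pow, map_pow, map_mul, rhobar_u hβ, rhobar_d hβ]
  rw [Module.End.mul_apply, Module.End.mul_apply, Dk_pow_single, DU_pow_single, Uk_pow_single]
  have e : m - l + 1 = m - (l : ℤ) + 1 := rfl
  congr 1
  ring

end Rep

section LemA

open MvPolynomial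

variable (α β)

noncomputable def gfun (N : ℕ) (m : ℤ) (l : ℕ) : R2 k :=
  mu α β (m - l + 1) ^ (N - l) * ∏ t ∈ Finset.range l, mu α β (m - t)

variable {α β}

lemma eval_gfun_l0 (hβ : β ≠ 0) (N : ℕ) (m : ℤ) :
    eval (fun i : Fin 2 => if i = 0 then -(bseq α β m) / wr α β m else aseq α β m / wr α β m)
      (gfun α β N m 0) = 1 := by
  have hw := wr_ne (α := α) (β := β) hβ m
  rw [gfun]
  simp only [Finset.range_zero, Finset.prod_empty, mul_one, Nat.sub_zero]
  rw [map_pow, eval_mu]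
  have : aseq α β (m - ((0 : ℕ) : ℤ) + 1) * (-(bseq α β m) / wr α β m)
      + bseq α β (m - ((0 : ℕ) : ℤ) + 1) * (aseq α β m / wr α β m) = 1 := by
    have e : m - ((0 : ℕ) : ℤ) + 1 = m + 1 := by push_cast; ring
    rw [e]
    field_simp
    rw [wr]
    ring
  rw [this, one_pow]

lemma eval_gfun_pos (hβ : β ≠ 0) (N : ℕ) (m : ℤ) (l : ℕ) (hl : 0 < l) :
    eval (fun i : Fin 2 => if i = 0 then -(bseq α β m) / wr α β m else aseq α β m / wr α β m)
      (gfun α β N m l) = 0 := by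
  have hw := wr_ne (α := α) (β := β) hβ m
  rw [gfun, map_mul]
  have : eval (fun i : Fin 2 => if i = 0 then -(bseq α β m) / wr α β m else aseq α β m / wr α β m)
      (∏ t ∈ Finset.range l, mu α β (m - t)) = 0 := by
    rw [map_prod]
    apply Finset.prod_eq_zero (Finset.mem_range.mpr hl)
    rw [eval_mu]
    have e : m - (0 : ℕ) = m := by push_cast; ring
    rw [e]
    field_simp
    ring
  rw [this, mul_zero]

lemma gfun_factor (N : ℕ) (m : ℤ) (l : ℕ) :
    gfun α β (N + 1) m (l + 1) = mu α β m * gfun α β N (m - 1) l := by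
  rw [gfun, gfun, Finset.prod_range_succ']
  have e1 : m - ((l + 1 : ℕ) : ℤ) + 1 = m - 1 - l + 1 := by push_cast; ring
  have e2 : N + 1 - (l + 1) = N - l := by omega
  have e3 : ∀ t : ℕ, m - ((t + 1 : ℕ) : ℤ) = m - 1 - t := by intro t; push_cast; ring
  rw [e1, e2]
  have e4 : (∏ t ∈ Finset.range l, mu α β (m - ((t + 1 : ℕ) : ℤ)))
      = ∏ t ∈ Finset.range l, mu α β (m - 1 - t) := by
    apply Finset.prod_congr rfl
    intro t _
    rw [e3]
  have e5 : m - ((0 : ℕ) : ℤ) = m := by push_cast; ring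
  rw [e4, e5]
  ring

lemma lemA (hβ : β ≠ 0) : ∀ (N : ℕ) (m : ℤ) (c : ℕ → k),
    (∑ l ∈ Finset.range (N + 1), c l • gfun α β N m l) = 0 → ∀ l ≤ N, c l = 0 := by
  intro N
  induction N with
  | zero =>
      intro m c h l hl
      interval_cases l
      rw [Finset.sum_range_one] at h
      have h1 : gfun α β 0 m 0 = 1 := by
        rw [gfun]; simp
      rw [h1] at h
      rcases smul_eq_zero.mp h with h' | h'
      · exact h'
      · exact absurd h' one_ne_zero
  | succ N ih =>
      intro m c h
      have hc0 : c 0 = 0 := by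
        have he := congrArg (eval (fun i : Fin 2 =>
          if i = 0 then -(bseq α β m) / wr α β m else aseq α β m / wr α β m)) h
        rw [map_sum, map_zero] at he
        have he2 : ∀ l ∈ Finset.range (N + 2), l ≠ 0 →
            eval (fun i : Fin 2 =>
              if i = 0 then -(bseq α β m) / wr α β m else aseq α β m / wr α β m)
              (c l • gfun α β (N + 1) m l) = 0 := by
          intro l _ hl
          rw [smul_eq_C_mul, map_mul, eval_C, eval_gfun_pos hβ _ _ _ (Nat.pos_of_ne_zero hl),
            mul_zero]
        rw [Finset.sum_eq_single_of_mem 0 (Finset.mem_range.mpr (by omega)) he2] at he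
        rw [smul_eq_C_mul, map_mul, eval_C, eval_gfun_l0 hβ, mul_one] at he
        exact he
      rw [Finset.sum_range_succ', hc0, zero_smul, add_zero] at h
      have h2 : mu α β m * ∑ l ∈ Finset.range (N + 1), c (l + 1) • gfun α β N (m - 1) l = 0 := by
        rw [Finset.mul_sum, ← h]
        apply Finset.sum_congr rfl
        intro l _
        rw [gfun_factor, mul_smul_comm]
      have h3 : ∑ l ∈ Finset.range (N + 1), c (l + 1) • gfun α β N (m - 1) l = 0 := by
        rcases mul_eq_zero.mp h2 with h4 | h4
        · exact absurd h4 (mu_ne_zero hβ m)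
        · exact h4
      have h5 := ih (m - 1) (fun l => c (l + 1)) h3
      intro l hl
      cases l with
      | zero => exact hc0
      | succ l' => exact h5 l' (by omega)

end LemA

section Final

open MvPolynomial

variable (α β)

noncomputable def Pfun (t : ℕ × ℕ × ℕ) : R2 k :=
  mu α β ((0 : ℤ) - t.2.2 + 1) ^ t.2.1 * ∏ u ∈ Finset.range t.2.2, mu α β ((0 : ℤ) - u)

variable {α β}

lemma rhobar_mon0 (hβ : β ≠ 0) (t : ℕ × ℕ × ℕ) :
    rhobar α β hβ (mon α β t) (Finsupp.single (0 : ℤ) 1)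
      = Finsupp.single ((0 : ℤ) - t.2.2 + t.1) (Pfun α β t) :=
  rhobar_mon hβ t 0

lemma Pfun_hom (t : ℕ × ℕ × ℕ) : (Pfun α β t).IsHomogeneous (t.2.1 + t.2.2) := by
  apply MvPolynomial.IsHomogeneous.mul
  · simpa using (mu_hom (α := α) (β := β) ((0 : ℤ) - t.2.2 + 1)).pow t.2.1
  · have := MvPolynomial.IsHomogeneous.prod (Finset.range t.2.2)
      (fun u => mu α β ((0 : ℤ) - u)) (fun _ => 1)
      (fun u _ => mu_hom (α := α) (β := β) ((0 : ℤ) - u))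
    simpa using this

lemma Pfun_eq_gfun {t : ℕ × ℕ × ℕ} {N : ℕ} (hdeg : N = t.2.1 + t.2.2) :
    Pfun α β t = gfun α β N 0 t.2.2 := by
  rw [Pfun, gfun]
  have e : N - t.2.2 = t.2.1 := by omega
  rw [e]

lemma mon_li (hβ : β ≠ 0) : LinearIndependent k (mon (k := k) α β) := by
  classical
  rw [linearIndependent_iff']
  intro s g hsum t0 ht0
  have h1 : ∑ t ∈ s, g t • (rhobar α β hβ) (mon α β t) = 0 := by
    have h := congrArg (rhobar α β hβ) hsum
    rw [map_sum, map_zero] at h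
    calc ∑ t ∈ s, g t • (rhobar α β hβ) (mon α β t)
        = ∑ t ∈ s, (rhobar α β hβ) (g t • mon α β t) :=
          Finset.sum_congr rfl (fun t _ => (map_smul _ _ _).symm)
      _ = 0 := h
  have h3 : (∑ t ∈ s, g t • Finsupp.single ((0 : ℤ) - t.2.2 + t.1) (Pfun α β t)) = 0 := by
    have h2 := congrArg (fun F : Module.End k (VV k) => F (Finsupp.single (0 : ℤ) 1)) h1
    simp only [LinearMap.sum_apply, LinearMap.smul_apply, LinearMap.zero_apply] at h2
    calc (∑ t ∈ s, g t • Finsupp.single ((0 : ℤ) - t.2.2 + t.1) (Pfun α β t))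
        = ∑ t ∈ s, g t • (rhobar α β hβ) (mon α β t) (Finsupp.single (0 : ℤ) 1) :=
          Finset.sum_congr rfl (fun t _ => by rw [rhobar_mon0 hβ])
      _ = 0 := h2
  have h4 : (∑ t ∈ s, g t • (if ((0 : ℤ) - t.2.2 + t.1) = ((0 : ℤ) - t0.2.2 + t0.1)
      then Pfun α β t else 0)) = 0 := by
    have := congrArg (fun v : VV k => v ((0 : ℤ) - t0.2.2 + t0.1)) h3
    simp only [Finsupp.finset_sum_apply, Finsupp.smul_apply, Finsupp.single_apply,
      Finsupp.coe_zero, Pi.zero_apply] at this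
    exact this
  have h5 : ∑ t ∈ s.filter
      (fun t => ((0 : ℤ) - t.2.2 + t.1) = ((0 : ℤ) - t0.2.2 + t0.1)), g t • Pfun α β t = 0 := by
    calc ∑ t ∈ s.filter
          (fun t => ((0 : ℤ) - t.2.2 + t.1) = ((0 : ℤ) - t0.2.2 + t0.1)), g t • Pfun α β t
        = ∑ t ∈ s, if ((0 : ℤ) - t.2.2 + t.1) = ((0 : ℤ) - t0.2.2 + t0.1)
            then g t • Pfun α β t else 0 := Finset.sum_filter _ _
      _ = ∑ t ∈ s, g t • (if ((0 : ℤ) - t.2.2 + t.1) = ((0 : ℤ) - t0.2.2 + t0.1)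
            then Pfun α β t else 0) := Finset.sum_congr rfl (fun t _ => by split_ifs <;> simp)
      _ = 0 := h4
  have h6 : ∑ t ∈ s.filter
      (fun t => ((0 : ℤ) - t.2.2 + t.1) = ((0 : ℤ) - t0.2.2 + t0.1)),
      g t • (if t0.2.1 + t0.2.2 = t.2.1 + t.2.2 then Pfun α β t else 0) = 0 := by
    have h6' := congrArg (homogeneousComponent (t0.2.1 + t0.2.2)) h5
    rw [map_sum, map_zero] at h6'
    calc ∑ t ∈ s.filter
          (fun t => ((0 : ℤ) - t.2.2 + t.1) = ((0 : ℤ) - t0.2.2 + t0.1)),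
          g t • (if t0.2.1 + t0.2.2 = t.2.1 + t.2.2 then Pfun α β t else 0)
        = ∑ t ∈ s.filter
          (fun t => ((0 : ℤ) - t.2.2 + t.1) = ((0 : ℤ) - t0.2.2 + t0.1)),
          homogeneousComponent (t0.2.1 + t0.2.2) (g t • Pfun α β t) := by
            apply Finset.sum_congr rfl
            intro t _
            rw [map_smul, homogeneousComponent_of_mem
              ((mem_homogeneousSubmodule _ _).mpr (Pfun_hom t))]
      _ = 0 := h6'
  have h7 : ∑ t ∈ (s.filter
      (fun t => ((0 : ℤ) - t.2.2 + t.1) = ((0 : ℤ) - t0.2.2 + t0.1))).filter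
      (fun t => t0.2.1 + t0.2.2 = t.2.1 + t.2.2), g t • Pfun α β t = 0 := by
    calc ∑ t ∈ (s.filter
          (fun t => ((0 : ℤ) - t.2.2 + t.1) = ((0 : ℤ) - t0.2.2 + t0.1))).filter
          (fun t => t0.2.1 + t0.2.2 = t.2.1 + t.2.2), g t • Pfun α β t
        = ∑ t ∈ s.filter
          (fun t => ((0 : ℤ) - t.2.2 + t.1) = ((0 : ℤ) - t0.2.2 + t0.1)),
          if t0.2.1 + t0.2.2 = t.2.1 + t.2.2 then g t • Pfun α β t else 0 := Finset.sum_filter _ _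
      _ = ∑ t ∈ s.filter
          (fun t => ((0 : ℤ) - t.2.2 + t.1) = ((0 : ℤ) - t0.2.2 + t0.1)),
          g t • (if t0.2.1 + t0.2.2 = t.2.1 + t.2.2 then Pfun α β t else 0) :=
            Finset.sum_congr rfl (fun t _ => by split_ifs <;> simp)
      _ = 0 := h6
  set s2 := (s.filter
      (fun t => ((0 : ℤ) - t.2.2 + t.1) = ((0 : ℤ) - t0.2.2 + t0.1))).filter
      (fun t => t0.2.1 + t0.2.2 = t.2.1 + t.2.2) with hs2
  have hmaps : ∀ t ∈ s2, t.2.2 ∈ Finset.range (t0.2.1 + t0.2.2 + 1) := by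
    intro t ht
    rw [hs2, Finset.mem_filter] at ht
    exact Finset.mem_range.mpr (by omega)
  have h8 : ∑ l ∈ Finset.range (t0.2.1 + t0.2.2 + 1),
      (∑ t ∈ s2.filter (fun t => t.2.2 = l), g t) • gfun α β (t0.2.1 + t0.2.2) 0 l = 0 := by
    calc ∑ l ∈ Finset.range (t0.2.1 + t0.2.2 + 1),
          (∑ t ∈ s2.filter (fun t => t.2.2 = l), g t) • gfun α β (t0.2.1 + t0.2.2) 0 l
        = ∑ l ∈ Finset.range (t0.2.1 + t0.2.2 + 1),
          ∑ t ∈ s2.filter (fun t => t.2.2 = l), g t • gfun α β (t0.2.1 + t0.2.2) 0 l :=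
            Finset.sum_congr rfl (fun l _ => Finset.sum_smul)
      _ = ∑ l ∈ Finset.range (t0.2.1 + t0.2.2 + 1),
          ∑ t ∈ s2.filter (fun t => t.2.2 = l), g t • Pfun α β t := by
            apply Finset.sum_congr rfl
            intro l _
            apply Finset.sum_congr rfl
            intro t ht
            rw [Finset.mem_filter] at ht
            have hl : t.2.2 = l := ht.2
            have hmem := ht.1
            rw [hs2, Finset.mem_filter] at hmem
            rw [Pfun_eq_gfun (N := t0.2.1 + t0.2.2) hmem.2, hl]
      _ = ∑ t ∈ s2, g t • Pfun α β t := Finset.sum_fiberwise_of_maps_to hmaps _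
      _ = 0 := h7
  have h9 := lemA hβ (t0.2.1 + t0.2.2) 0 _ h8 t0.2.2 (by omega)
  have h10 : ∑ t ∈ s2.filter (fun t => t.2.2 = t0.2.2), g t = g t0 := by
    apply Finset.sum_eq_single_of_mem
    · rw [Finset.mem_filter, hs2, Finset.mem_filter, Finset.mem_filter]
      exact ⟨⟨⟨ht0, rfl⟩, rfl⟩, rfl⟩
    · intro t ht hne
      exfalso
      apply hne
      rw [Finset.mem_filter, hs2, Finset.mem_filter, Finset.mem_filter] at ht
      obtain ⟨⟨⟨hts, hcond⟩, hdeg⟩, hl⟩ := ht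
      obtain ⟨a1, a2, a3⟩ := t
      obtain ⟨b1, b2, b3⟩ := t0
      simp only at hcond hdeg hl ⊢
      have e1 : a3 = b3 := hl
      have e2 : a2 = b2 := by omega
      have e3 : a1 = b1 := by
        subst e1
        omega
      simp [e1, e2, e3]
  rw [h10] at h9
  exact h9

end Final

end DUAux

/-- the monomials `uⁱ(du)ʲdˡ` for `(i,j,l) ∈ ℕ³` form a `k`-linear basis
of `D(α,β)`: they are linearly independent and span `D(α,β)`. -/
theorem downUp_monomial_basis (k : Type*) [Field k] [IsAlgClosed k] [CharZero k]
    (α β : k) (hβ : β ≠ 0) :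
    LinearIndependent k (fun t : ℕ × ℕ × ℕ =>
        DownUp.u k α β ^ t.1 * (DownUp.d k α β * DownUp.u k α β) ^ t.2.1 *
          DownUp.d k α β ^ t.2.2) ∧
    Submodule.span k (Set.range (fun t : ℕ × ℕ × ℕ =>
        DownUp.u k α β ^ t.1 * (DownUp.d k α β * DownUp.u k α β) ^ t.2.1 *
          DownUp.d k α β ^ t.2.2)) = ⊤ := by
  constructor
  · exact DUAux.mon_li hβ
  · exact DUAux.span_top hβ

end
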